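/- Suppose cf(δ) > κ⁺, I is an ideal on κ, and ⟨f_α : α < δ⟩ is a ≤_I-increasing sequence of functions in ^κOrd. If moreover cf(δ) > 2^κ, then ⟨f_α : α < δ⟩ has a ≤_I-least upper bound. -/

import Mathlib

open Cardinal Set

/-- `I` is a (proper) ideal on the index set `ι`. -/
def IsIdealOn {ι : Type} (I : Set (Set ι)) : Prop :=
  ∅ ∈ I ∧ (∀ s t : Set ι, s ⊆ t → t ∈ I → s ∈ I) ∧
    (∀ s t : Set ι, s ∈ I → t ∈ I → s ∪ t ∈ I) ∧ Set.univ ∉ I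

/-- `f ≤_I g` : the set where `f` exceeds `g` is in the ideal. -/
def leMod {ι : Type} (I : Set (Set ι)) (f g : ι → Ordinal) : Prop :=
  {i | g i < f i} ∈ I

namespace ExistsLubAux

noncomputable section

open Classical

universe v

variable {ι : Type} (I : Set (Set ι)) (δ : Ordinal.{0}) (F : Ordinal.{0} → ι → Ordinal.{v})

/-- A pointwise upper bound for the whole sequence. -/
def gtop : ι → Ordinal :=
  fun i => ⨆ β : δ.ToType, F ((Ordinal.ToType.mk (o := δ)).symm β).1 i

theorem le_gtop {α : Ordinal} (hα : α < δ) (i : ι) : F α i ≤ gtop δ F i := by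
  have h := le_ciSup
    (Ordinal.bddAbove_range fun β : δ.ToType => F ((Ordinal.ToType.mk (o := δ)).symm β).1 i)
    (Ordinal.ToType.mk (o := δ) ⟨α, hα⟩)
  simpa [gtop] using h

/-- `f` is an upper bound (mod `I`) of the sequence. -/
def isUB (f : ι → Ordinal) : Prop := ∀ α, α < δ → leMod I (F α) f

/-- The minimal-cover function for the family `G` restricted below stage `ξ`. -/
def mfun (G : Ordinal → ι → Ordinal) (ξ α : Ordinal) : ι → Ordinal :=
  fun i => sInf {v | (∃ ζ, ζ < ξ ∧ v = G ζ i) ∧ F α i ≤ v}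

/-- `mm` has a value repeated cofinally often below `δ`. -/
def goodW (mm : Ordinal → ι → Ordinal) : Prop :=
  ∃ α, α < δ ∧ ∀ β, β < δ → ∃ γ, β ≤ γ ∧ γ < δ ∧ mm γ = mm α

/-- The cofinally-repeated minimal-cover value (if it exists). -/
def W (mm : Ordinal → ι → Ordinal) : ι → Ordinal :=
  if h : goodW δ mm then mm h.choose else gtop δ F

/-- An adversarial upper bound witnessing that `ww` is not a least upper bound,
if there is one. -/
def HH (ww : ι → Ordinal) : ι → Ordinal :=
  if h : ∃ h', isUB I δ F h' ∧ ¬ leMod I ww h' then h.choose else ww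

/-- One step of the construction. -/
def gstep (mm : Ordinal → ι → Ordinal) : ι → Ordinal :=
  fun i => min (W δ F mm i) (HH I δ F (W δ F mm) i)

/-- The transfinite recursion. -/
def g : Ordinal → ι → Ordinal :=
  Ordinal.lt_wf.fix fun ξ IH =>
    if ξ = 0 then gtop δ F
    else gstep I δ F (mfun F (fun ζ => if h : ζ < ξ then IH ζ h else fun _ => 0) ξ)

theorem mfun_congr {G G' : Ordinal → ι → Ordinal} (ξ : Ordinal)
    (h : ∀ ζ, ζ < ξ → G ζ = G' ζ) : mfun F G ξ = mfun F G' ξ := by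
  funext α i
  unfold mfun
  congr 1
  ext v
  simp only [Set.mem_setOf_eq, and_congr_left_iff]
  intro _
  constructor
  · rintro ⟨ζ, h1, h2⟩
    exact ⟨ζ, h1, by rw [← h ζ h1]; exact h2⟩
  · rintro ⟨ζ, h1, h2⟩
    exact ⟨ζ, h1, by rw [h ζ h1]; exact h2⟩

theorem g_eq (ξ : Ordinal) :
    g I δ F ξ = if ξ = 0 then gtop δ F else gstep I δ F (mfun F (g I δ F) ξ) := by
  conv_lhs => rw [g, WellFounded.fix_eq]
  by_cases h0 : ξ = 0
  · simp [h0]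
  · rw [if_neg h0, if_neg h0]
    refine congrArg (gstep I δ F) (mfun_congr F ξ (fun ζ hζ => ?_))
    rw [dif_pos hζ]
    rfl

theorem g_zero : g I δ F 0 = gtop δ F := by rw [g_eq]; simp

theorem mfun_mem {ξ α : Ordinal} (hξ : 0 < ξ) (hα : α < δ) (i : ι) :
    (∃ ζ, ζ < ξ ∧ mfun F (g I δ F) ξ α i = g I δ F ζ i) ∧
      F α i ≤ mfun F (g I δ F) ξ α i := by
  have hne : {v | (∃ ζ, ζ < ξ ∧ v = g I δ F ζ i) ∧ F α i ≤ v}.Nonempty := by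
    refine ⟨gtop δ F i, ⟨0, hξ, ?_⟩, le_gtop δ F hα i⟩
    rw [g_zero]
  exact csInf_mem hne

theorem mfun_le {ξ α : Ordinal} {v : Ordinal} {i : ι}
    (hv : (∃ ζ, ζ < ξ ∧ v = g I δ F ζ i) ∧ F α i ≤ v) :
    mfun F (g I δ F) ξ α i ≤ v :=
  csInf_le' hv

/-- Pigeonhole: a map from ordinals into a type of size `< cf δ` has a value
attained cofinally often below `δ`. -/
theorem pigeonhole {A : Type} {δ : Ordinal} (hA : #A < δ.cof) (c : Ordinal → A) :
    ∃ a : A, ∀ β, β < δ → ∃ γ, β ≤ γ ∧ γ < δ ∧ c γ = a := by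
  by_contra hcon
  push_neg at hcon
  choose b hb1 hb2 using hcon
  have hs : (⨆ a, b a) < δ := Ordinal.iSup_lt_ord hA hb1
  exact hb2 (c (⨆ a, b a)) (⨆ a, b a) (le_ciSup (Ordinal.bddAbove_range _) _) hs rfl

end

end ExistsLubAux

open ExistsLubAux

/-- if `cf(δ) > κ⁺` and `cf(δ) > 2^κ`, any `≤_I`-increasing
`δ`-sequence in `^κOrd` has a `≤_I`-least upper bound. -/
theorem exists_lub_of_big_cof {ι : Type} (I : Set (Set ι)) (hI : IsIdealOn I)
    (δ : Ordinal) (F : Ordinal → ι → Ordinal)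
    (hcof1 : Order.succ (#ι) < δ.cof)
    (hcof2 : 2 ^ #ι < δ.cof)
    (hinc : ∀ α β, α < β → β < δ → leMod I (F α) (F β)) :
    ∃ f : ι → Ordinal, (∀ α < δ, leMod I (F α) f) ∧
      ∀ f' : ι → Ordinal, (∀ α < δ, leMod I (F α) f') → leMod I f f' := by
  classical
  obtain ⟨hIempty, hImono, hIunion, -⟩ := hI
  have hδ0 : 0 < δ := by
    rcases eq_zero_or_pos δ with h | h
    · rw [h, Ordinal.cof_zero] at hcof2
      exact absurd hcof2 (by simp)
    · exact h
  -- the set where two sequences compare, with `≤` mod `I`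
  have hleI : ∀ {α β : Ordinal}, α ≤ β → β < δ → {i | F β i < F α i} ∈ I := by
    intro α β hab hβ
    rcases lt_or_eq_of_le hab with h | h
    · exact hinc α β h hβ
    · subst h
      have : {i | F α i < F α i} = (∅ : Set ι) := by ext i; simp
      rw [this]; exact hIempty
  by_cases hfin : #ι < ℵ₀
  -- Finite index set: the ideal is principal and the pointwise sup works.
  · have hfinι : Finite ι := Cardinal.lt_aleph0_iff_finite.1 hfin
    have hIfin : I.Finite := Set.toFinite I
    obtain ⟨a, haI, hamax⟩ := Set.Finite.exists_maximalFor id I hIfin ⟨∅, hIempty⟩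
    have hsub : ∀ t ∈ I, t ⊆ a := by
      intro t ht
      have h1 : a ∪ t ∈ I := hIunion a t haI ht
      have h2 : a = a ∪ t := le_antisymm subset_union_left (hamax h1 subset_union_left)
      rw [h2]
      exact subset_union_right
    refine ⟨gtop δ F, fun α hα => ?_, fun f' hf' => ?_⟩
    · have : {i | gtop δ F i < F α i} = (∅ : Set ι) := by
        ext i
        simp only [mem_setOf_eq, mem_empty_iff_false, iff_false, not_lt]
        exact le_gtop δ F hα i
      rw [leMod, this]; exact hIempty
    · refine hImono _ a ?_ haI
      intro i hi
      simp only [mem_setOf_eq] at hi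
      -- f' i < gtop δ F i, so some F α i exceeds f' i
      by_contra hia
      have hub : ∀ β : δ.ToType, F ((Ordinal.ToType.mk (o := δ)).symm β).1 i ≤ f' i := by
        intro β
        by_contra hb
        push_neg at hb
        have hβδ : ((Ordinal.ToType.mk (o := δ)).symm β).1 < δ :=
          ((Ordinal.ToType.mk (o := δ)).symm β).2
        have : i ∈ {j | f' j < F ((Ordinal.ToType.mk (o := δ)).symm β).1 j} := hb
        exact hia (hsub _ (hf' _ hβδ) this)
      have : gtop δ F i ≤ f' i := by
        have hne : Nonempty δ.ToType :=
          Ordinal.nonempty_toType_iff.2 (pos_iff_ne_zero.1 hδ0)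
        exact ciSup_le hub
      exact absurd hi (not_lt.2 this)
  -- Infinite index set: the main construction.
  · have hκ : ℵ₀ ≤ #ι := not_lt.1 hfin
    have hιinf : Infinite ι := Cardinal.infinite_iff.2 hκ
    have hιne : Nonempty ι := inferInstance
    set Ω : Ordinal := (Order.succ (#ι) : Cardinal).ord with hΩdef
    have hsuccreg : (Order.succ (#ι) : Cardinal).IsRegular := Cardinal.isRegular_succ hκ
    have hΩcof : Ω.cof = Order.succ (#ι) := hsuccreg.cof_eq
    have hΩlim : Order.IsSuccLimit Ω := Cardinal.isSuccLimit_ord (hκ.trans (Order.le_succ _))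
    have hκ2 : (Order.succ (#ι) : Cardinal) ≤ 2 ^ #ι := Order.succ_le_of_lt (Cardinal.cantor _)
    -- abbreviation
    set mf : Ordinal → Ordinal → ι → Ordinal := fun ξ α => mfun F (g I δ F) ξ α with hmfdef
    -- comparison of minimal covers along the sequence
    have hcompare : ∀ ξ' : Ordinal, 0 < ξ' → ∀ α' β' : Ordinal, α' ≤ β' → β' < δ →
        {i | mf ξ' β' i < mf ξ' α' i} ∈ I := by
      intro ξ' hξ' α' β' hab hβ'
      refine hImono _ _ ?_ (hleI hab hβ')
      intro i hi
      simp only [mem_setOf_eq] at hi ⊢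
      by_contra hF
      push_neg at hF
      have hmem := mfun_mem I δ F hξ' hβ' i
      obtain ⟨⟨ζ, hζ, heq⟩, hFb⟩ := hmem
      have : mf ξ' α' i ≤ mf ξ' β' i :=
        mfun_le I δ F ⟨⟨ζ, hζ, heq⟩, hF.trans hFb⟩
      exact absurd hi (not_lt.2 this)
    -- every stage 0 < ξ < Ω is good
    have stagePH : ∀ ξ : Ordinal, 0 < ξ → ξ < Ω → goodW δ (mf ξ) := by
      intro ξ hξ0 hξΩ
      have hcard : ξ.card ≤ #ι := Order.lt_succ_iff.1 (Cardinal.lt_ord.1 hξΩ)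
      have hAcard : #(ι → ξ.ToType) < δ.cof := by
        have h1 : #(ι → ξ.ToType) = (ξ.card) ^ (#ι) := by
          rw [Cardinal.mk_arrow, Cardinal.mk_toType]; simp
        rw [h1]
        calc (ξ.card) ^ (#ι) ≤ (#ι) ^ (#ι) := Cardinal.power_le_power_right hcard
          _ = 2 ^ (#ι) := Cardinal.power_self_eq hκ
          _ < δ.cof := hcof2
      -- selector sets
      have hSne : ∀ α : Ordinal, α < δ → ∀ i : ι,
          {ζ | ζ < ξ ∧ g I δ F ζ i = mf ξ α i}.Nonempty := by
        intro α hα i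
        obtain ⟨⟨ζ, hζ, heq⟩, -⟩ := mfun_mem I δ F hξ0 hα i
        exact ⟨ζ, hζ, heq.symm⟩
      have hSmem : ∀ α (hα : α < δ) (i : ι),
          sInf {ζ | ζ < ξ ∧ g I δ F ζ i = mf ξ α i} ∈
            {ζ | ζ < ξ ∧ g I δ F ζ i = mf ξ α i} :=
        fun α hα i => csInf_mem (hSne α hα i)
      let mk : ∀ α : Ordinal, α < δ → ι → ξ.ToType := fun α hα i =>
        Ordinal.ToType.mk (o := ξ) ⟨sInf {ζ | ζ < ξ ∧ g I δ F ζ i = mf ξ α i},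
          (hSmem α hα i).1⟩
      have hmk : ∀ α (hα : α < δ) β (hβ : β < δ), mk α hα = mk β hβ → mf ξ α = mf ξ β := by
        intro α hα β hβ hmkeq
        funext i
        have h1 := congrFun hmkeq i
        have h2 : (⟨sInf {ζ | ζ < ξ ∧ g I δ F ζ i = mf ξ α i}, (hSmem α hα i).1⟩ :
            Set.Iio ξ) = ⟨sInf {ζ | ζ < ξ ∧ g I δ F ζ i = mf ξ β i}, (hSmem β hβ i).1⟩ :=
          (Ordinal.ToType.mk (o := ξ)).injective h1
        have h3 : sInf {ζ | ζ < ξ ∧ g I δ F ζ i = mf ξ α i} =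
            sInf {ζ | ζ < ξ ∧ g I δ F ζ i = mf ξ β i} := congrArg Subtype.val h2
        have h4 := (hSmem α hα i).2
        have h5 := (hSmem β hβ i).2
        rw [h3] at h4
        exact h4.symm.trans h5
      let c : Ordinal → ι → ξ.ToType := fun α =>
        if hα : α < δ then mk α hα else mk 0 hδ0
      obtain ⟨a, ha⟩ := pigeonhole hAcard c
      obtain ⟨α₀, -, hα₀, hc0⟩ := ha 0 hδ0
      refine ⟨α₀, hα₀, fun β hβ => ?_⟩
      obtain ⟨γ, hβγ, hγ, hcγ⟩ := ha β hβ
      refine ⟨γ, hβγ, hγ, ?_⟩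
      have e1 : c γ = c α₀ := hcγ.trans hc0.symm
      rw [show c γ = mk γ hγ from dif_pos hγ, show c α₀ = mk α₀ hα₀ from dif_pos hα₀] at e1
      exact hmk γ hγ α₀ hα₀ e1
    -- W at a good stage
    have hWeq : ∀ ξ : Ordinal, (hg : goodW δ (mf ξ)) →
        W δ F (mf ξ) = mf ξ hg.choose := by
      intro ξ hg
      exact dif_pos hg
    -- W is an upper bound at good stages
    have hWub : ∀ ξ : Ordinal, 0 < ξ → (hg : goodW δ (mf ξ)) → isUB I δ F (W δ F (mf ξ)) := by
      intro ξ hξ0 hg α' hα'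
      rw [hWeq ξ hg]
      obtain ⟨hchlt, hch⟩ := hg.choose_spec
      obtain ⟨γ, hγ1, hγ2, hγm⟩ := hch α' hα'
      rw [leMod, ← hγm]
      refine hImono _ _ ?_ (hleI hγ1 hγ2)
      intro i hi
      simp only [mem_setOf_eq] at hi ⊢
      have hFle := (mfun_mem I δ F hξ0 hγ2 i).2
      exact lt_of_le_of_lt hFle hi
    -- stabilization of stage functions
    have stab : ∀ α : Ordinal, α < δ → ∃ ρ : Ordinal, ρ < Ω ∧
        ∀ ξ : Ordinal, ρ ≤ ξ → ξ ≤ Ω → mf ξ α = mf Ω α := by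
      intro α hα
      have h1 : ∀ i : ι, ∃ ζ, ζ < Ω ∧ mf Ω α i = g I δ F ζ i :=
        fun i => (mfun_mem I δ F hΩlim.pos hα i).1
      choose ζf hζ1 hζ2 using h1
      refine ⟨⨆ i, ζf i + 1, ?_, ?_⟩
      · refine Ordinal.iSup_lt_ord ?_ ?_
        · rw [hΩcof]; exact Order.lt_succ _
        · intro i
          rw [Ordinal.add_one_eq_succ]
          exact hΩlim.succ_lt (hζ1 i)
      · intro ξ hρξ hξΩ
        have hξ0 : 0 < ξ := by
          refine lt_of_lt_of_le ?_ hρξ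
          refine lt_of_lt_of_le ?_ (le_ciSup (Ordinal.bddAbove_range _) (Classical.arbitrary ι))
          exact lt_of_le_of_lt zero_le (lt_add_one _)
        funext i
        have hζfi : ζf i < ξ := by
          have h2 : ζf i + 1 ≤ ⨆ i, ζf i + 1 :=
            le_ciSup (Ordinal.bddAbove_range _) i
          have h3 : ζf i < ζf i + 1 := lt_add_one _
          exact lt_of_lt_of_le h3 (h2.trans hρξ)
        apply le_antisymm
        · -- mf ξ α i ≤ g (ζf i) i = mf Ω α i
          have hle : mf ξ α i ≤ g I δ F (ζf i) i := by
            refine mfun_le I δ F ⟨⟨ζf i, hζfi, rfl⟩, ?_⟩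
            rw [← hζ2 i]
            exact (mfun_mem I δ F hΩlim.pos hα i).2
          rw [← hζ2 i] at hle
          exact hle
        · -- mf Ω α i ≤ mf ξ α i
          obtain ⟨⟨ζ, hζξ, heq⟩, hFle⟩ := mfun_mem I δ F hξ0 hα i
          exact mfun_le I δ F ⟨⟨ζ, lt_of_lt_of_le hζξ hξΩ, heq⟩, hFle⟩
    choose ρf hρ1 hρ2 using stab
    -- pigeonhole the stabilization stages
    have hA2 : #(Ω.ToType) < δ.cof := by
      rw [Cardinal.mk_toType, hΩdef, Cardinal.card_ord]
      exact lt_of_le_of_lt hκ2 hcof2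
    let c2 : Ordinal → Ω.ToType := fun α =>
      if hα : α < δ then Ordinal.ToType.mk (o := Ω) ⟨ρf α hα, hρ1 α hα⟩
      else Ordinal.ToType.mk (o := Ω) ⟨0, hΩlim.pos⟩
    obtain ⟨t, ht⟩ := pigeonhole hA2 c2
    set ξs : Ordinal := ((Ordinal.ToType.mk (o := Ω)).symm t).1 with hξsdef
    have hξsΩ : ξs < Ω := ((Ordinal.ToType.mk (o := Ω)).symm t).2
    have hfib : ∀ γ (hγ : γ < δ), c2 γ = t → ρf γ hγ = ξs := by
      intro γ hγ hcγ
      rw [show c2 γ = Ordinal.ToType.mk (o := Ω) ⟨ρf γ hγ, hρ1 γ hγ⟩ from dif_pos hγ] at hcγ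
      have := congrArg (fun x => ((Ordinal.ToType.mk (o := Ω)).symm x).1) hcγ
      simpa using this
    set σ : Ordinal := ξs + 1 with hσdef
    have hσ0 : 0 < σ := lt_of_le_of_lt zero_le (lt_add_one _)
    have hσΩ : σ < Ω := by
      rw [hσdef, Ordinal.add_one_eq_succ]
      exact hΩlim.succ_lt hξsΩ
    have hσ10 : 0 < σ + 1 := lt_of_le_of_lt zero_le (lt_add_one _)
    have hσ1Ω : σ + 1 < Ω := by
      rw [Ordinal.add_one_eq_succ]
      exact hΩlim.succ_lt hσΩ
    have hσσ1 : σ < σ + 1 := lt_add_one _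
    -- the two good stages
    have Gdσ : goodW δ (mf σ) := stagePH σ hσ0 hσΩ
    have Gdσ1 : goodW δ (mf (σ + 1)) := stagePH (σ + 1) hσ10 hσ1Ω
    obtain ⟨hachδ, hachspec⟩ := Gdσ.choose_spec
    obtain ⟨hach1δ, hach1spec⟩ := Gdσ1.choose_spec
    have hwσ : W δ F (mf σ) = mf σ Gdσ.choose := hWeq σ Gdσ
    have hwσ1 : W δ F (mf (σ + 1)) = mf (σ + 1) Gdσ1.choose := hWeq (σ + 1) Gdσ1
    -- main dichotomy
    by_cases hP : ∃ h', isUB I δ F h' ∧ ¬ leMod I (W δ F (mf σ)) h'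
    · exfalso
      obtain ⟨hh'ub, hh'bad⟩ := hP.choose_spec
      -- unfold g at stage σ
      have hgσ : g I δ F σ = fun i => min (W δ F (mf σ) i) (hP.choose i) := by
        rw [g_eq]
        rw [if_neg (pos_iff_ne_zero.1 hσ0)]
        unfold gstep HH
        rw [dif_pos hP]
      -- g σ is an upper bound
      have hgσub : isUB I δ F (g I δ F σ) := by
        intro α' hα'
        rw [hgσ, leMod]
        have hsub : {i | min (W δ F (mf σ) i) (hP.choose i) < F α' i} ⊆
            {i | W δ F (mf σ) i < F α' i} ∪ {i | hP.choose i < F α' i} := by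
          intro i hi
          simp only [mem_setOf_eq, min_lt_iff] at hi
          rcases hi with h | h
          · exact Or.inl h
          · exact Or.inr h
        exact hImono _ _ hsub
          (hIunion _ _ (hWub σ hσ0 Gdσ α' hα') (hh'ub α' hα'))
      -- choose β in the stable fiber above Gdσ.choose
      obtain ⟨β, hβ1, hβδ, hβc⟩ := ht Gdσ.choose hachδ
      have hρβ : ρf β hβδ = ξs := hfib β hβδ hβc
      have hstabσ : mf σ β = mf Ω β := by
        refine hρ2 β hβδ σ ?_ (le_of_lt hσΩ)
        rw [hρβ, hσdef]
        exact le_of_lt (lt_add_one _)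
      have hstabσ1 : mf (σ + 1) β = mf Ω β := by
        refine hρ2 β hβδ (σ + 1) ?_ (le_of_lt hσ1Ω)
        rw [hρβ, hσdef]
        exact le_of_lt (lt_trans (lt_add_one _) (lt_add_one _))
      -- choose γ at stage σ+1 above β
      obtain ⟨γ, hγ1, hγδ, hγm⟩ := hach1spec β hβδ
      -- {wσ1 < wσ} ∈ I
      have key1 : {i | mf σ β i < mf σ Gdσ.choose i} ∈ I := hcompare σ hσ0 _ β hβ1 hβδ
      have key2 : {i | mf (σ + 1) γ i < mf (σ + 1) β i} ∈ I :=
        hcompare (σ + 1) hσ10 β γ hγ1 hγδ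
      have hwlt : {i | W δ F (mf (σ + 1)) i < W δ F (mf σ) i} ∈ I := by
        refine hImono _ _ ?_ (hIunion _ _ key1 key2)
        intro i hi
        simp only [mem_setOf_eq] at hi ⊢
        rw [hwσ1, ← hγm] at hi
        rw [hwσ] at hi
        by_cases h1 : mf σ β i < mf σ Gdσ.choose i
        · exact Or.inl h1
        · push_neg at h1
          right
          have : mf σ Gdσ.choose i ≤ mf (σ + 1) β i := by
            rw [hstabσ1, ← hstabσ]
            exact h1
          exact lt_of_lt_of_le hi this
      -- wσ1 ≤ g σ wherever F Gdσ1.choose ≤ g σ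
      have hcov : {i | g I δ F σ i < F Gdσ1.choose i} ∈ I := hgσub Gdσ1.choose hach1δ
      -- the contradiction: the bad set of hP.choose is in I
      have hB : {i | hP.choose i < W δ F (mf σ) i} ∈ I := by
        refine hImono _ _ ?_ (hIunion _ _ hwlt hcov)
        intro i hi
        simp only [mem_setOf_eq] at hi ⊢
        by_cases h2 : g I δ F σ i < F Gdσ1.choose i
        · exact Or.inr h2
        · push_neg at h2
          left
          have h3 : W δ F (mf (σ + 1)) i ≤ g I δ F σ i := by
            rw [hwσ1]
            exact mfun_le I δ F ⟨⟨σ, hσσ1, rfl⟩, h2⟩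
          have h4 : g I δ F σ i ≤ hP.choose i := by
            rw [hgσ]
            exact min_le_right _ _
          exact lt_of_le_of_lt (h3.trans h4) hi
      exact hh'bad hB
    · -- no adversary: W at stage σ is a least upper bound
      push_neg at hP
      exact ⟨W δ F (mf σ), fun α hα => hWub σ hσ0 Gdσ α hα, fun f' hf' => hP f' hf'⟩
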